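/- Let d ≥ 1, let β_j > 0 and β'_j > 0 for j = 1,…,d, and let γ > 0 and γ' > 0. If γ' > (1/2) Σ_{j=1}^d 1/β'_j + (max_{1≤j≤d} β_j/β'_j) · γ, then ∫_{{λ ∈ ℝ^d : |λ| > 1}} (Σ_{j=1}^d |λ_j|^{β_j})^{2γ} / (Σ_{j=1}^d |λ_j|^{β'_j})^{2γ'} dλ < ∞. -/

import Mathlib

open MeasureTheory Filter Complex
open scoped BigOperators ENNReal NNReal

noncomputable section

abbrev Rd (d : ℕ) := EuclideanSpace ℝ (Fin d)
abbrev Cd (d : ℕ) := EuclideanSpace ℂ (Fin d)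

/-- Embedding of `ℝ^d` into `ℂ^d`. -/
def embedC {d : ℕ} (lam : Rd d) : Cd d := WithLp.toLp 2 (fun j => (lam j : ℂ))

/-- `e_t(λ) = exp(i⟨t,λ⟩) − 1`. -/
def eFun {d : ℕ} (t lam : Rd d) : ℂ :=
  Complex.exp (Complex.I * ((inner ℝ t lam : ℝ) : ℂ)) - 1

/-- The cube `Π_T = [−T,T]^d`. -/
def cube (d : ℕ) (T : ℝ) : Set (Rd d) := {t | ∀ j, |t j| ≤ T}

/-- `φ` is a (real) finite linear combination of the `e_t`, `t ∈ D`. -/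
def IsExpPolyOn {d : ℕ} (D : Set (Rd d)) (φ : Rd d → ℂ) : Prop :=
  ∃ (n : ℕ) (a : Fin n → ℝ) (t : Fin n → Rd d),
    (∀ k, t k ∈ D) ∧ ∀ lam, φ lam = ∑ k, (a k : ℂ) * eFun (t k) lam

/-- Entire extension of an exponential polynomial to `ℂ^d`. -/
def expPolyExt {d : ℕ} {n : ℕ} (a : Fin n → ℝ) (t : Fin n → Rd d) (z : Cd d) : ℂ :=
  ∑ k, (a k : ℂ) * (Complex.exp (Complex.I * ∑ j, (t k j : ℂ) * z j) - 1)

/-- `‖φ‖_f² = ∫ |φ(λ)|² f(λ) dλ`. -/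
def fNormSq {d : ℕ} (f : Rd d → ℝ) (φ : Rd d → ℂ) : ℝ :=
  ∫ lam, ‖φ lam‖ ^ 2 * f lam

def fNorm {d : ℕ} (f : Rd d → ℝ) (φ : Rd d → ℂ) : ℝ := Real.sqrt (fNormSq f φ)

/-- `⟨φ,ψ⟩_f = ∫ φ conj(ψ) f dλ`. -/
def fInner {d : ℕ} (f : Rd d → ℝ) (φ ψ : Rd d → ℂ) : ℂ :=
  ∫ lam, φ lam * (starRingEnd ℂ) (ψ lam) * ((f lam : ℝ) : ℂ)

def mNormSq {d : ℕ} (F : Measure (Rd d)) (φ : Rd d → ℂ) : ℝ :=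
  ∫ lam, ‖φ lam‖ ^ 2 ∂F

def mNorm {d : ℕ} (F : Measure (Rd d)) (φ : Rd d → ℂ) : ℝ := Real.sqrt (mNormSq F φ)

def mInner {d : ℕ} (F : Measure (Rd d)) (φ ψ : Rd d → ℂ) : ℂ :=
  ∫ lam, φ lam * (starRingEnd ℂ) (ψ lam) ∂F

/-- Condition (C1). -/
def CondC1 {d : ℕ} (f : Rd d → ℝ) : Prop :=
  ∃ c k η : ℝ, 0 < c ∧ 0 < k ∧ 0 < η ∧
    ∀ lam : Rd d, k < ‖lam‖ → c / ‖lam‖ ^ η ≤ f lam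

/-- Spectral integrability condition for a density. -/
def SpectralIntDensity {d : ℕ} (f : Rd d → ℝ) : Prop :=
  ∫⁻ lam : Rd d, ENNReal.ofReal (‖lam‖ ^ 2 / (1 + ‖lam‖ ^ 2) * f lam) < ⊤

/-- Spectral integrability condition for a measure. -/
def SpectralIntMeasure {d : ℕ} (F : Measure (Rd d)) : Prop :=
  ∫⁻ lam : Rd d, ENNReal.ofReal (‖lam‖ ^ 2 / (1 + ‖lam‖ ^ 2)) ∂F < ⊤

/-- Symmetry of a measure under `λ ↦ −λ`. -/
def SymmetricMeasure {d : ℕ} (F : Measure (Rd d)) : Prop :=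
  Measure.map (fun lam : Rd d => -lam) F = F

/-- The measure `f(λ)dλ`. -/
def densityMeasure {d : ℕ} (f : Rd d → ℝ) : Measure (Rd d) :=
  volume.withDensity fun lam => ENNReal.ofReal (f lam)

/-- `C_F(t,s)`, the (real) covariance associated to a spectral measure `F`. -/
def specCov {d : ℕ} (F : Measure (Rd d)) (t s : Rd d) : ℝ :=
  (∫ lam, eFun t lam * (starRingEnd ℂ) (eFun s lam) ∂F).re

/-- `μ` is the Gaussian measure with spectral measure `F` on `D`. -/
def IsGaussianOn {d : ℕ} (F : Measure (Rd d)) (D : Set (Rd d))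
    (μ : Measure (D → ℝ)) : Prop :=
  IsProbabilityMeasure μ ∧
  ∀ (n : ℕ) (t : Fin n → D) (a : Fin n → ℝ),
    ∫ x, Complex.exp (Complex.I * ∑ j, (a j : ℂ) * ((x (t j) : ℝ) : ℂ)) ∂μ =
      Complex.exp (-(1/2 : ℂ) *
        ∑ j, ∑ k, (a j : ℂ) * (a k : ℂ) * ((specCov F (t j) (t k) : ℝ) : ℂ))

/-- Mutual absolute continuity. -/
def MeasEquiv {α : Type*} [MeasurableSpace α] (μ ν : Measure α) : Prop :=
  μ ≪ ν ∧ ν ≪ μ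

/-- Membership in `L_{Π_T}(f)`: an `L²(f dλ)`-limit of exponential polynomials over `Π_T`. -/
def MemLspan {d : ℕ} (T : ℝ) (f : Rd d → ℝ) (g : Rd d → ℂ) : Prop :=
  ∃ φ : ℕ → (Rd d → ℂ), (∀ m, IsExpPolyOn (cube d T) (φ m)) ∧
    Tendsto (fun m => fNormSq f fun lam => φ m lam - g lam) atTop (nhds 0)

/-- A reproducing kernel for `L_{Π_T}(f)`. -/
def IsReprKernel {d : ℕ} (T : ℝ) (f : Rd d → ℝ) (K : Rd d → Rd d → ℂ) : Prop :=
  (∀ ω, MemLspan T f (K ω)) ∧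
  ∀ t ∈ cube d T, ∀ ω : Rd d, fInner f (eFun t) (K ω) = eFun t ω

/-- A finite linear combination of tensors `(ω,λ) ↦ e_t(ω) conj(e_s(λ))`, `t, s ∈ D`. -/
def IsTensorExpPoly {d : ℕ} (D : Set (Rd d)) (ψ : Rd d × Rd d → ℂ) : Prop :=
  ∃ (n : ℕ) (b : Fin n → ℂ) (t s : Fin n → Rd d),
    (∀ k, t k ∈ D ∧ s k ∈ D) ∧
    ∀ p : Rd d × Rd d, ψ p = ∑ k, b k * eFun (t k) p.1 * (starRingEnd ℂ) (eFun (s k) p.2)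

/-- Membership in the closure in `L²(F ⊗ F)` of the span of tensor exponential polynomials. -/
def MemTensorSpan {d : ℕ} (D : Set (Rd d)) (F : Measure (Rd d))
    (ψ : Rd d × Rd d → ℂ) : Prop :=
  ∃ Ψ : ℕ → (Rd d × Rd d → ℂ), (∀ m, IsTensorExpPoly D (Ψ m)) ∧
    Tendsto (fun m => ∫ p, ‖Ψ m p - ψ p‖ ^ 2 ∂(F.prod F)) atTop (nhds 0)

/-- Finite exponential type. -/
def FiniteExpType {d : ℕ} (Φ : Cd d → ℂ) : Prop :=
  ∃ C M : ℝ, 0 < C ∧ 0 < M ∧ ∀ z : Cd d, ‖Φ z‖ ≤ C * Real.exp (M * ‖z‖)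

/-- Condition (C2). -/
def CondC2 {d : ℕ} (f : Rd d → ℝ) : Prop :=
  ∃ Φ : Cd d → ℂ, Differentiable ℂ Φ ∧ FiniteExpType Φ ∧
    ∃ c₁ c₂ R : ℝ, 0 < c₁ ∧ c₁ ≤ c₂ ∧ 0 < R ∧
      ∀ lam : Rd d, R ≤ ‖lam‖ →
        c₁ * f lam ≤ ‖Φ (embedC lam)‖ ^ 2 ∧
        ‖Φ (embedC lam)‖ ^ 2 ≤ c₂ * f lam

lemma aux_int_1d {b p : ℝ} (hb : 0 < b) (hp : 0 < p) (hbp : 1 < b * p) :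
    Integrable (fun x : ℝ => (1 + |x| ^ b) ^ (-p)) := by
  have hpos : ∀ x : ℝ, (0:ℝ) < 1 + |x| ^ b := fun x => by positivity
  have hcont : Continuous fun x : ℝ => (1 + |x| ^ b) ^ (-p) := by
    have h1 : Continuous fun x : ℝ => 1 + |x| ^ b :=
      continuous_const.add (continuous_abs.rpow_const fun x => Or.inr hb.le)
    exact h1.rpow_const fun x => Or.inl (hpos x).ne'
  have hIoi : IntegrableOn (fun x : ℝ => (1 + |x| ^ b) ^ (-p)) (Set.Ioi 1) := by
    refine Integrable.mono' (integrableOn_Ioi_rpow_of_lt (by linarith : -(b*p) < -1) one_pos)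
      hcont.aestronglyMeasurable ?_
    filter_upwards [ae_restrict_mem measurableSet_Ioi] with x hx
    have hx1 : (1:ℝ) < x := hx
    have hx0 : (0:ℝ) < x := lt_trans one_pos hx1
    rw [Real.norm_eq_abs, _root_.abs_of_nonneg (Real.rpow_nonneg (hpos x).le _)]
    have h2 : x ^ b ≤ 1 + |x| ^ b := by
      rw [abs_of_pos hx0]; linarith
    have h3 : (0:ℝ) < x ^ b := Real.rpow_pos_of_pos hx0 _
    calc (1 + |x| ^ b) ^ (-p) ≤ (x ^ b) ^ (-p) :=
          Real.rpow_le_rpow_of_nonpos h3 h2 (neg_nonpos.mpr hp.le)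
      _ = x ^ (-(b*p)) := by rw [← Real.rpow_mul hx0.le]; ring_nf
  have hIio : IntegrableOn (fun x : ℝ => (1 + |x| ^ b) ^ (-p)) (Set.Iio (-1)) := by
    rw [← (Measure.measurePreserving_neg (volume : Measure ℝ)).integrableOn_comp_preimage
        (Homeomorph.neg ℝ).measurableEmbedding]
    simp only [Function.comp_def, abs_neg, Set.neg_preimage, Set.neg_Iio, neg_neg]
    exact hIoi
  have hIcc : IntegrableOn (fun x : ℝ => (1 + |x| ^ b) ^ (-p)) (Set.Icc (-1) 1) :=
    hcont.integrableOn_Icc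
  have hcover : (Set.univ : Set ℝ) ⊆ Set.Iio (-1) ∪ Set.Icc (-1) 1 ∪ Set.Ioi 1 := by
    intro x _
    rcases lt_or_ge x (-1) with h | h
    · exact Or.inl (Or.inl h)
    rcases le_or_gt x 1 with h2 | h2
    · exact Or.inl (Or.inr ⟨h, h2⟩)
    · exact Or.inr h2
  rw [← integrableOn_univ]
  exact ((hIio.union hIcc).union hIoi).mono_set hcover

lemma aux_prod_int {d : ℕ} (h : Fin d → ℝ → ℝ) (hint : ∀ j, Integrable (h j)) :
    Integrable (fun lam : EuclideanSpace ℝ (Fin d) => ∏ j, h j (lam j)) := by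
  have h1 : Integrable (fun x : Fin d → ℝ => ∏ j, h j (x j)) :=
    Integrable.fintype_prod_dep hint
  exact ((EuclideanSpace.volume_preserving_symm_measurableEquiv_toLp (Fin d)).integrable_comp_emb
    (MeasurableEquiv.toLp 2 (Fin d → ℝ)).symm.measurableEmbedding).mpr h1

set_option maxHeartbeats 1000000 in
theorem stmt_13 (d : ℕ) (hd : 1 ≤ d) (β β' : Fin d → ℝ)
    (hβ : ∀ j, 0 < β j) (hβ' : ∀ j, 0 < β' j)
    (γ γ' : ℝ) (hγ : 0 < γ) (hγ' : 0 < γ')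
    (hcond : (1 / 2) * (∑ j, 1 / β' j) + (⨆ j, β j / β' j) * γ < γ') :
    ∫⁻ lam in {lam : Rd d | 1 < ‖lam‖},
      ENNReal.ofReal
        ((∑ j, |lam j| ^ β j) ^ (2 * γ) / (∑ j, |lam j| ^ β' j) ^ (2 * γ')) < ⊤ := by
  classical
  haveI : NeZero d := ⟨by omega⟩
  haveI : Nonempty (Fin d) := ⟨0⟩
  set M := ⨆ j, β j / β' j with hMdef
  have hfin : ∀ j : Fin d, β j / β' j ≤ M := fun j =>
    le_ciSup (f := fun j => β j / β' j) ((Set.finite_range _).bddAbove) j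
  have hM0 : 0 < M := lt_of_lt_of_le (div_pos (hβ 0) (hβ' 0)) (hfin 0)
  have hβM : ∀ j, β j ≤ M * β' j := fun j => by
    have h := (div_le_iff₀ (hβ' j)).mp (hfin j); linarith
  set δ := γ' - M * γ with hδdef
  have hS : 0 < ∑ j, 1 / β' j :=
    Finset.sum_pos (fun j _ => by have := hβ' j; positivity) Finset.univ_nonempty
  have hδ : (∑ j, 1 / β' j) / 2 < δ := by simp only [hδdef]; linarith
  have hδ0 : 0 < δ := lt_of_le_of_lt (by linarith) hδ
  set ε := (1 - ∑ j, 1 / (2 * δ * β' j)) / d with hεdef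
  have hsumlt : ∑ j, 1 / (2 * δ * β' j) < 1 := by
    have heq : ∑ j, 1 / (2 * δ * β' j) = (∑ j, 1 / β' j) / (2 * δ) := by
      rw [Finset.sum_div]
      refine Finset.sum_congr rfl fun j _ => ?_
      rw [div_div]; ring_nf
    rw [heq, div_lt_one (by linarith)]
    linarith
  have hd0 : (0:ℝ) < d := by
    have : (0:ℕ) < d := by omega
    exact_mod_cast this
  have hε0 : 0 < ε := div_pos (by linarith) hd0
  set w := fun j => 1 / (2 * δ * β' j) + ε with hwdef
  have hw0 : ∀ j, 0 < w j := fun j => by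
    have hb := hβ' j
    simp only [hwdef]; positivity
  have hwsum : ∑ j, w j = 1 := by
    simp only [hwdef]
    rw [Finset.sum_add_distrib, Finset.sum_const, Finset.card_univ, Fintype.card_fin,
      nsmul_eq_mul, hεdef]
    field_simp
    ring
  set p := fun j => 2 * δ * w j with hpdef
  have hp0 : ∀ j, 0 < p j := fun j => by
    have := hw0 j; simp only [hpdef]; positivity
  have hbp : ∀ j, 1 < β' j * p j := fun j => by
    have h1 : β' j * p j = 1 + 2 * δ * ε * β' j := by
      have hb := (hβ' j).ne'
      simp only [hpdef, hwdef]
      field_simp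
    rw [h1]
    have h2 := mul_pos (mul_pos hδ0 hε0) (hβ' j)
    linarith
  set h : Fin d → ℝ → ℝ := fun j x => (1 + |x| ^ β' j) ^ (-(p j)) with hhdef
  have hint : ∀ j, Integrable (h j) := fun j =>
    aux_int_1d (hβ' j) (hp0 j) (hbp j)
  have hG : Integrable (fun lam : Rd d => ∏ j, h j (lam j)) := aux_prod_int h hint
  set bmax := Finset.univ.sup' Finset.univ_nonempty β' with hbmaxdef
  have hble : ∀ j, β' j ≤ bmax := fun j => Finset.le_sup' β' (Finset.mem_univ j)
  have hsd : (1:ℝ) ≤ Real.sqrt d := by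
    rw [show (1:ℝ) = Real.sqrt 1 by simp]
    exact Real.sqrt_le_sqrt (by exact_mod_cast hd)
  have hsd0 : (0:ℝ) < (Real.sqrt d)⁻¹ := by positivity
  have hsd1 : (Real.sqrt d)⁻¹ ≤ 1 := by
    rw [inv_le_one_iff₀]; right; exact hsd
  set c₀ := (Real.sqrt d)⁻¹ ^ bmax with hc₀def
  have hc₀0 : 0 < c₀ := Real.rpow_pos_of_pos hsd0 _
  set C := (2*(d:ℝ)) ^ (2*γ) * (1 + 1/c₀) ^ (2*γ') with hCdef
  have hC0 : 0 < C := by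
    have h1 : (0:ℝ) < 2*(d:ℝ) := by linarith
    have h2 : (0:ℝ) < 1 + 1/c₀ := by positivity
    exact mul_pos (Real.rpow_pos_of_pos h1 _) (Real.rpow_pos_of_pos h2 _)
  have hpt : ∀ lam : Rd d, 1 < ‖lam‖ →
      (∑ j, |lam j| ^ β j) ^ (2 * γ) / (∑ j, |lam j| ^ β' j) ^ (2 * γ')
        ≤ C * ∏ j, h j (lam j) := by
    intro lam hlam
    set a := fun j => |lam j| with hadef
    have ha0 : ∀ j, 0 ≤ a j := fun j => abs_nonneg _
    set B := ∑ j, a j ^ β' j with hBdef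
    have hterm0 : ∀ j, 0 ≤ a j ^ β' j := fun j => Real.rpow_nonneg (ha0 j) _
    have hB0 : 0 ≤ B := Finset.sum_nonneg fun j _ => hterm0 j
    have htermB : ∀ j, a j ^ β' j ≤ B := fun j =>
      Finset.single_le_sum (fun i _ => hterm0 i) (Finset.mem_univ j)
    have hex : ∃ j0, (Real.sqrt d)⁻¹ ≤ a j0 := by
      by_contra hcon
      push_neg at hcon
      have hn : ‖lam‖ < 1 := by
        rw [EuclideanSpace.norm_eq]
        rw [show (1:ℝ) = Real.sqrt 1 by simp]
        apply Real.sqrt_lt_sqrt (Finset.sum_nonneg fun j _ => sq_nonneg _)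
        calc ∑ j, ‖lam j‖ ^ 2 < ∑ _j : Fin d, ((Real.sqrt d)⁻¹)^2 := by
              apply Finset.sum_lt_sum_of_nonempty Finset.univ_nonempty
              intro j _
              exact pow_lt_pow_left₀ (hcon j) (ha0 j) (by norm_num)
          _ = d * ((Real.sqrt d)⁻¹)^2 := by
              rw [Finset.sum_const, Finset.card_univ, Fintype.card_fin, nsmul_eq_mul]
          _ = 1 := by
              rw [inv_pow, Real.sq_sqrt hd0.le]
              field_simp
      linarith
    obtain ⟨j0, hj0⟩ := hex
    have hBc : c₀ ≤ B := by
      have h1 : c₀ ≤ (Real.sqrt d)⁻¹ ^ β' j0 :=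
        Real.rpow_le_rpow_of_exponent_ge hsd0 hsd1 (hble j0)
      have h2 : (Real.sqrt d)⁻¹ ^ β' j0 ≤ a j0 ^ β' j0 :=
        Real.rpow_le_rpow hsd0.le hj0 (hβ' j0).le
      exact le_trans (le_trans h1 h2) (htermB j0)
    have hBpos : 0 < B := lt_of_lt_of_le hc₀0 hBc
    have h1B : (0:ℝ) < 1 + B := by linarith
    have hA : (∑ j, a j ^ β j) ≤ 2 * d * (1 + B) ^ M := by
      have key : ∀ j, a j ^ β j ≤ 2 * (1 + B) ^ M := by
        intro j
        have hone : (1:ℝ) ≤ (1 + B) ^ M := Real.one_le_rpow (by linarith) hM0.le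
        rcases le_or_gt (a j) 1 with hle | hgt
        · have := Real.rpow_le_one (ha0 j) hle (hβ j).le
          nlinarith
        · have h1 : a j ^ β j ≤ a j ^ (M * β' j) :=
            Real.rpow_le_rpow_of_exponent_le hgt.le (hβM j)
          have h2 : a j ^ (M * β' j) = (a j ^ β' j) ^ M := by
            rw [mul_comm, Real.rpow_mul (ha0 j)]
          have h3 : (a j ^ β' j) ^ M ≤ (1 + B) ^ M :=
            Real.rpow_le_rpow (hterm0 j) (by linarith [htermB j]) hM0.le
          calc a j ^ β j ≤ (1 + B) ^ M := by rw [h2] at h1; linarith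
            _ ≤ 2 * (1 + B) ^ M := by linarith
      calc (∑ j, a j ^ β j) ≤ ∑ _j : Fin d, 2 * (1 + B) ^ M :=
            Finset.sum_le_sum fun j _ => key j
        _ = 2 * d * (1 + B) ^ M := by
            rw [Finset.sum_const, Finset.card_univ, Fintype.card_fin, nsmul_eq_mul]; ring
    have hAnum : (∑ j, a j ^ β j) ^ (2*γ) ≤ (2*(d:ℝ)) ^ (2*γ) * (1 + B) ^ (M * (2*γ)) := by
      have hA0 : 0 ≤ ∑ j, a j ^ β j :=
        Finset.sum_nonneg fun j _ => Real.rpow_nonneg (ha0 j) _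
      calc (∑ j, a j ^ β j) ^ (2*γ) ≤ (2 * d * (1 + B) ^ M) ^ (2*γ) :=
            Real.rpow_le_rpow hA0 hA (by positivity)
        _ = (2*(d:ℝ)) ^ (2*γ) * (1 + B) ^ (M * (2*γ)) := by
            rw [Real.mul_rpow (by linarith : (0:ℝ) ≤ 2*(d:ℝ)) (Real.rpow_nonneg h1B.le _),
              ← Real.rpow_mul h1B.le]
    have hden : (B ^ (2*γ'))⁻¹ ≤ (1 + 1/c₀) ^ (2*γ') * (1 + B) ^ (-(2*γ')) := by
      have hBr : (0:ℝ) < B ^ (2*γ') := Real.rpow_pos_of_pos hBpos _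
      have h1Br : (0:ℝ) < (1 + B) ^ (2*γ') := Real.rpow_pos_of_pos h1B _
      have hstep : 1 + B ≤ (1 + 1/c₀) * B := by
        have h' : 1 ≤ B * (1/c₀) := by
          rw [← div_eq_mul_one_div]
          exact (one_le_div hc₀0).mpr hBc
        have hexp : (1 + 1/c₀) * B = B + B * (1/c₀) := by ring
        rw [hexp]
        linarith
      have hstep2 : (1 + B) ^ (2*γ') ≤ (1 + 1/c₀) ^ (2*γ') * B ^ (2*γ') := by
        calc (1 + B) ^ (2*γ') ≤ ((1 + 1/c₀) * B) ^ (2*γ') :=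
              Real.rpow_le_rpow h1B.le hstep (by positivity)
          _ = (1 + 1/c₀) ^ (2*γ') * B ^ (2*γ') :=
              Real.mul_rpow (by positivity) hBpos.le
      have hfrac : 1 / B ^ (2*γ') ≤ (1 + 1/c₀) ^ (2*γ') / (1 + B) ^ (2*γ') :=
        (div_le_div_iff₀ hBr h1Br).mpr (by rw [one_mul]; exact hstep2)
      rw [Real.rpow_neg h1B.le]
      calc (B ^ (2*γ'))⁻¹ = 1 / B ^ (2*γ') := (one_div _).symm
        _ ≤ (1 + 1/c₀) ^ (2*γ') / (1 + B) ^ (2*γ') := hfrac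
        _ = (1 + 1/c₀) ^ (2*γ') * ((1 + B) ^ (2*γ'))⁻¹ := div_eq_mul_inv _ _
    have hcomb : (∑ j, a j ^ β j) ^ (2*γ) / B ^ (2*γ') ≤ C * (1 + B) ^ (-(2*δ)) := by
      have hnum0 : 0 ≤ (∑ j, a j ^ β j) ^ (2*γ) :=
        Real.rpow_nonneg (Finset.sum_nonneg fun j _ => Real.rpow_nonneg (ha0 j) _) _
      have hmul := mul_le_mul hAnum hden
        (inv_nonneg.mpr (Real.rpow_nonneg hB0 _)) (by positivity)
      rw [div_eq_mul_inv]
      refine le_trans hmul (le_of_eq ?_)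
      have hexp : M * (2*γ) + -(2*γ') = -(2*δ) := by rw [hδdef]; ring
      rw [hCdef, ← hexp, Real.rpow_add h1B]
      ring
    have hAM : (1 + B) ^ (-(2*δ)) ≤ ∏ j, h j (lam j) := by
      have hbase : ∀ j, (1:ℝ) ≤ 1 + a j ^ β' j := fun j => by linarith [hterm0 j]
      set P := ∏ j, (1 + a j ^ β' j) ^ w j with hPdef
      have hP1 : (1:ℝ) ≤ P := by
        calc (1:ℝ) = ∏ _j : Fin d, (1:ℝ) := by simp
          _ ≤ P := Finset.prod_le_prod (fun j _ => by norm_num)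
              (fun j _ => Real.one_le_rpow (hbase j) (hw0 j).le)
      have hPle : P ≤ 1 + B := by
        have hgm := Real.geom_mean_le_arith_mean_weighted Finset.univ w
          (fun j => 1 + a j ^ β' j) (fun j _ => (hw0 j).le) hwsum
          (fun j _ => (by linarith [hterm0 j] : (0:ℝ) ≤ 1 + a j ^ β' j))
        refine le_trans hgm ?_
        have heq1 : ∑ j, w j * (1 + a j ^ β' j) = 1 + ∑ j, w j * (a j ^ β' j) := by
          simp_rw [mul_add, mul_one]
          rw [Finset.sum_add_distrib, hwsum]
        rw [heq1]
        have hle2 : ∑ j, w j * (a j ^ β' j) ≤ B := by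
          rw [hBdef]
          refine Finset.sum_le_sum fun j _ => ?_
          have hwle : w j ≤ 1 :=
            hwsum ▸ Finset.single_le_sum (fun i _ => (hw0 i).le) (Finset.mem_univ j)
          nlinarith [hterm0 j, hw0 j]
        linarith
      have h5 : (1 + B) ^ (-(2*δ)) ≤ P ^ (-(2*δ)) :=
        Real.rpow_le_rpow_of_nonpos (by linarith) hPle (by linarith)
      refine le_trans h5 (le_of_eq ?_)
      rw [hPdef, ← Real.finset_prod_rpow _ _
        (fun j _ => Real.rpow_nonneg (by linarith [hterm0 j] : (0:ℝ) ≤ 1 + a j ^ β' j) _) _]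
      refine Finset.prod_congr rfl fun j _ => ?_
      rw [← Real.rpow_mul (by linarith [hterm0 j] : (0:ℝ) ≤ 1 + a j ^ β' j)]
      show (1 + a j ^ β' j) ^ (w j * -(2*δ)) = (1 + |lam j| ^ β' j) ^ (-(p j))
      have : w j * -(2*δ) = -(p j) := by simp only [hpdef]; ring
      rw [this]
    calc (∑ j, |lam j| ^ β j) ^ (2 * γ) / (∑ j, |lam j| ^ β' j) ^ (2 * γ')
        ≤ C * (1 + B) ^ (-(2*δ)) := hcomb
      _ ≤ C * ∏ j, h j (lam j) := by
          exact mul_le_mul_of_nonneg_left hAM hC0.le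
  -- conclude
  have hmeas : Measurable fun lam : Rd d => ENNReal.ofReal (C * ∏ j, h j (lam j)) := by
    apply Measurable.ennreal_ofReal
    apply Measurable.const_mul
    apply Finset.measurable_prod
    intro j _
    have hc : Continuous (h j) := by
      have h1 : Continuous fun x : ℝ => 1 + |x| ^ β' j :=
        continuous_const.add (continuous_abs.rpow_const fun x => Or.inr (hβ' j).le)
      exact h1.rpow_const fun x => Or.inl (by positivity)
    exact hc.measurable.comp
      ((measurable_pi_apply j).comp (MeasurableEquiv.toLp 2 (Fin d → ℝ)).symm.measurable)
  have step1 : ∫⁻ lam in {lam : Rd d | 1 < ‖lam‖},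
        ENNReal.ofReal
          ((∑ j, |lam j| ^ β j) ^ (2 * γ) / (∑ j, |lam j| ^ β' j) ^ (2 * γ'))
      ≤ ∫⁻ lam in {lam : Rd d | 1 < ‖lam‖},
          ENNReal.ofReal (C * ∏ j, h j (lam j)) :=
    setLIntegral_mono hmeas fun lam hl => ENNReal.ofReal_le_ofReal (hpt lam hl)
  have step2 : ∫⁻ lam in {lam : Rd d | 1 < ‖lam‖},
          ENNReal.ofReal (C * ∏ j, h j (lam j))
      ≤ ∫⁻ lam : Rd d, ENNReal.ofReal (C * ∏ j, h j (lam j)) :=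
    setLIntegral_le_lintegral _ _
  have step3 : ∫⁻ lam : Rd d, ENNReal.ofReal (C * ∏ j, h j (lam j))
      ≤ ∫⁻ lam : Rd d, (‖C * ∏ j, h j (lam j)‖₊ : ℝ≥0∞) := by
    refine lintegral_mono fun lam => ?_
    rw [← enorm_eq_nnnorm, Real.enorm_eq_ofReal_abs]
    exact ENNReal.ofReal_le_ofReal (le_abs_self _)
  have step4 : ∫⁻ lam : Rd d, (‖C * ∏ j, h j (lam j)‖₊ : ℝ≥0∞) < ⊤ := (hG.const_mul C).2
  exact lt_of_le_of_lt (le_trans (le_trans step1 step2) step3) step4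

end
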